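/- arXiv:1508.07240 — 2 statements merged into one kernel-verified Lean document; each statement's English description precedes it below -/
import Mathlib

section
/- The function y(x) = −2·ln(1 + x²) solves y''(x) + (2/x)·y'(x) + 4(2e^{y(x)} + e^{y(x)/2}) = 0 for all x > 0, and satisfies y(0) = 0 and y'(0) = 0. -/
lemma pos1 (x : ℝ) : (0:ℝ) < 1 + x ^ 2 := by positivity

lemma hd1 (x : ℝ) :
    HasDerivAt (fun t : ℝ => -2 * Real.log (1 + t ^ 2)) (-4 * x / (1 + x ^ 2)) x := by
  have h : HasDerivAt (fun t : ℝ => 1 + t ^ 2) (2 * x) x := by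
    simpa using ((hasDerivAt_pow 2 x).const_add 1)
  have : HasDerivAt (fun t : ℝ => -2 * Real.log (1 + t ^ 2)) (-2 * (2 * x / (1 + x ^ 2))) x :=
    (h.log (pos1 x).ne').const_mul (-2 : ℝ)
  convert this using 1
  ring

lemma deriv1 : deriv (fun t : ℝ => -2 * Real.log (1 + t ^ 2))
    = fun x : ℝ => -4 * x / (1 + x ^ 2) := by
  funext x; exact (hd1 x).deriv

lemma hd2 (x : ℝ) :
    HasDerivAt (fun t : ℝ => -4 * t / (1 + t ^ 2))
      ((-4 * (1 + x ^ 2) - (-4 * x) * (2 * x)) / (1 + x ^ 2) ^ 2) x := by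
  have h : HasDerivAt (fun t : ℝ => 1 + t ^ 2) (2 * x) x := by
    simpa using ((hasDerivAt_pow 2 x).const_add 1)
  have := ((hasDerivAt_id x).const_mul (-4 : ℝ)).div h (pos1 x).ne'
  simpa [Pi.div_def] using this

lemma exp_eq (x : ℝ) : Real.exp (-2 * Real.log (1 + x ^ 2)) = ((1 + x ^ 2) ^ 2)⁻¹ := by
  have h : (-2 : ℝ) * Real.log (1 + x ^ 2) = Real.log (((1 + x ^ 2) ^ 2)⁻¹) := by
    rw [Real.log_inv, Real.log_pow]; push_cast; ring
  rw [h, Real.exp_log (by positivity)]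

lemma exp_eq2 (x : ℝ) : Real.exp (-2 * Real.log (1 + x ^ 2) / 2) = (1 + x ^ 2)⁻¹ := by
  have h : (-2 : ℝ) * Real.log (1 + x ^ 2) / 2 = Real.log ((1 + x ^ 2)⁻¹) := by
    rw [Real.log_inv]; ring
  rw [h, Real.exp_log (by positivity)]

theorem laneEmden_example5 :
    (∀ x : ℝ, 0 < x →
      deriv (deriv (fun t : ℝ => -2 * Real.log (1 + t ^ 2))) x
        + (2 / x) * deriv (fun t : ℝ => -2 * Real.log (1 + t ^ 2)) x
        + 4 * (2 * Real.exp (-2 * Real.log (1 + x ^ 2))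
          + Real.exp ((-2 * Real.log (1 + x ^ 2)) / 2)) = 0) ∧
    (fun t : ℝ => -2 * Real.log (1 + t ^ 2)) 0 = 0 ∧
    deriv (fun t : ℝ => -2 * Real.log (1 + t ^ 2)) 0 = 0 := by
  refine ⟨fun x hx => ?_, by simp, by rw [deriv1]; simp⟩
  rw [deriv1, (hd2 x).deriv, exp_eq, exp_eq2]
  have h := (pos1 x).ne'
  field_simp
  ring
end

section
/- Suppose y is twice continuously differentiable on [0, ∞), satisfies y'' + (2/x)y' + y^m = 0 on (0, ∞) with y(0) = 1 and y > 0 on [0, R) for some R > 0, where m ≥ 1 is a natural number. Then y'(x) < 0 for all x in (0, R), i.e., y is strictly decreasing on (0, R). -/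
theorem laneEmden_strict_decreasing (m : ℕ) (hm : 1 ≤ m) (y : ℝ → ℝ) (R : ℝ) (hR : 0 < R)
    (hy : ContDiffOn ℝ 2 y (Set.Ici (0 : ℝ)))
    (hode : ∀ x : ℝ, 0 < x →
      deriv (deriv y) x + (2 / x) * deriv y x + (y x) ^ m = 0)
    (hy0 : y 0 = 1)
    (hpos : ∀ x : ℝ, 0 ≤ x → x < R → 0 < y x) :
    ∀ x : ℝ, 0 < x → x < R → deriv y x < 0 := by
  intro x hx hxR
  -- g t = t^2 * derivWithin y (Ici 0) t
  set g : ℝ → ℝ := fun t => t ^ 2 * derivWithin y (Set.Ici (0 : ℝ)) t with hg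
  have hdW : ∀ t : ℝ, 0 < t → derivWithin y (Set.Ici (0 : ℝ)) t = deriv y t := by
    intro t ht
    exact derivWithin_of_mem_nhds (Ici_mem_nhds ht)
  -- deriv y is C^1 on Ioi 0
  have hyIoi : ContDiffOn ℝ 2 y (Set.Ioi (0 : ℝ)) := hy.mono Set.Ioi_subset_Ici_self
  have hdy1 : ContDiffOn ℝ 1 (deriv y) (Set.Ioi (0 : ℝ)) :=
    hyIoi.deriv_of_isOpen isOpen_Ioi (by norm_num)
  -- g is continuous on [0, x]
  have hgcont : ContinuousOn g (Set.Icc 0 x) := by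
    apply ContinuousOn.mul (by fun_prop)
    exact (hy.continuousOn_derivWithin (uniqueDiffOn_Ici 0) one_le_two).mono
      (fun t ht => ht.1)
  -- g has negative derivative on (0, x)
  have hderiv : ∀ t ∈ Set.Ioo (0 : ℝ) x, deriv g t < 0 := by
    intro t ht
    have ht0 : (0 : ℝ) < t := ht.1
    have hdy_t : DifferentiableAt ℝ y t :=
      (hyIoi.differentiableOn (by norm_num)).differentiableAt (Ioi_mem_nhds ht0)
    have hddy_t : DifferentiableAt ℝ (deriv y) t :=
      (hdy1.differentiableOn (by norm_num)).differentiableAt (Ioi_mem_nhds ht0)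
    have h1 : HasDerivAt (fun s => s ^ 2 * deriv y s)
        (2 * t * deriv y t + t ^ 2 * deriv (deriv y) t) t := by
      have := (hasDerivAt_pow 2 t).mul hddy_t.hasDerivAt
      simpa [mul_comm, mul_assoc, Pi.mul_def] using this
    have heq : g =ᶠ[nhds t] fun s => s ^ 2 * deriv y s := by
      filter_upwards [Ioi_mem_nhds ht0] with s hs
      simp [hg, hdW s hs]
    have h2 : HasDerivAt g (2 * t * deriv y t + t ^ 2 * deriv (deriv y) t) t :=
      h1.congr_of_eventuallyEq heq
    rw [h2.deriv]
    have hode_t := hode t ht0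
    have hddy : deriv (deriv y) t = -((2 / t) * deriv y t) - (y t) ^ m := by linarith
    rw [hddy]
    have hyt : 0 < y t := hpos t ht0.le (ht.2.trans hxR)
    have : 2 * t * deriv y t + t ^ 2 * (-(2 / t * deriv y t) - y t ^ m)
        = - (t ^ 2 * y t ^ m) := by
      field_simp
      ring
    rw [this]
    have : 0 < t ^ 2 * y t ^ m := by positivity
    linarith
  -- g is strictly decreasing on [0, x]
  have hanti : StrictAntiOn g (Set.Icc 0 x) := by
    apply strictAntiOn_of_deriv_neg (convex_Icc 0 x) hgcont
    intro t ht
    rw [interior_Icc] at ht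
    exact hderiv t ht
  have h0x : g x < g 0 :=
    hanti (Set.left_mem_Icc.2 hx.le) (Set.right_mem_Icc.2 hx.le) hx
  have hg0 : g 0 = 0 := by simp [hg]
  have hgx : g x = x ^ 2 * deriv y x := by simp [hg, hdW x hx]
  rw [hg0, hgx] at h0x
  have hx2 : 0 < x ^ 2 := by positivity
  nlinarith
end
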